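/- arXiv:2304.09963 — 2 statements merged into one kernel-verified Lean document; each statement's English description precedes it below -/
import Mathlib

section
/- Let k be an algebraically closed field, and let f, g ∈ k[x, y, z] be homogeneous polynomials of degrees e₁ ≥ 1 and e₂ ≥ 1 respectively, with f irreducible. If the set of points of ℙ² over k at which both f and g vanish has at least e₁·e₂ + 1 elements, then every point of ℙ² at which f vanishes is also a point at which g vanishes (equivalently, f divides g in k[x, y, z]). -/
/-- A homogeneous polynomial `f ∈ k[x,y,z]` vanishes at a point `P` of the projective
plane `ℙ²` over `k` if it vanishes at a (equivalently, for homogeneous `f`, any) nonzero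
representative vector of `P`. -/
def VanishesAt {k : Type} [Field k]
    (f : MvPolynomial (Fin 3) k) (P : Projectivization k (Fin 3 → k)) : Prop :=
  MvPolynomial.eval P.rep f = 0
open MvPolynomial

section Helpers

lemma degree_eq_sum_id (d : Fin 3 →₀ ℕ) : d.degree = d.sum fun _ => id := by
  rw [Finsupp.degree, Finsupp.sum]; rfl

noncomputable def degEquiv (m : ℕ) : {d : Fin 3 →₀ ℕ // d.degree = m} ≃ Sym (Fin 3) m where
  toFun d := ⟨Finsupp.toMultiset d.1, by
    rw [Finsupp.card_toMultiset, ← degree_eq_sum_id]; exact d.2⟩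
  invFun s := ⟨Multiset.toFinsupp s.1, by
    have := Finsupp.card_toMultiset (Multiset.toFinsupp s.1)
    rw [Multiset.toFinsupp_toMultiset, ← degree_eq_sum_id] at this
    rw [← this]; exact s.2⟩
  left_inv d := by ext : 1; simp
  right_inv s := by ext : 1; simp

lemma card_deg (m : ℕ) : Nat.card {d : Fin 3 →₀ ℕ // d.degree = m} = (m+2).choose 2 := by
  rw [Nat.card_congr (degEquiv m), Nat.card_eq_fintype_card, Sym.card_sym_eq_choose]
  have h3 : Fintype.card (Fin 3) + m - 1 = m + 2 := by simp; omega
  rw [h3, ← Nat.choose_symm (by omega : m ≤ m + 2)]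
  congr 1; omega

lemma two_mul_choose_two (n : ℕ) : 2 * (n+2).choose 2 = (n+1)*(n+2) := by
  rw [Nat.choose_two_right]
  have e : n + 2 - 1 = n + 1 := by omega
  rw [e, Nat.two_mul_div_two_of_even]
  · ring
  · have : (n+2)*(n+1) = (n+1)*(n+2) := by ring
    rw [this]; exact Nat.even_mul_succ_self (n+1)

lemma choose_identity (a b t : ℕ) :
    (a+b+t+2).choose 2 + (t+2).choose 2 = (b+t+2).choose 2 + (a+t+2).choose 2 + a*b := by
  have h := two_mul_choose_two
  have h2 : 2 * ((a+b+t+2).choose 2 + (t+2).choose 2)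
      = 2 * ((b+t+2).choose 2 + (a+t+2).choose 2 + a*b) := by
    rw [Nat.mul_add, Nat.mul_add, Nat.mul_add, h, h, h, h]; ring
  omega

variable (k : Type) [Field k]

lemma H_eq (m : ℕ) : homogeneousSubmodule (Fin 3) k m
    = restrictSupport k {d | d.degree = m} := by
  rw [homogeneousSubmodule_eq_finsupp_supported]; rfl

noncomputable instance degFintype (m : ℕ) : Fintype {d : Fin 3 →₀ ℕ // d.degree = m} :=
  Fintype.ofEquiv _ (degEquiv m).symm

noncomputable instance (m : ℕ) :
    FiniteDimensional k (homogeneousSubmodule (Fin 3) k m) := by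
  rw [H_eq]
  haveI : Fintype ↑{d : Fin 3 →₀ ℕ | d.degree = m} := degFintype m
  exact Module.Finite.of_basis
    (basisRestrictSupport k {d : Fin 3 →₀ ℕ | d.degree = m})

lemma finrank_H (m : ℕ) :
    Module.finrank k (homogeneousSubmodule (Fin 3) k m) = (m+2).choose 2 := by
  rw [H_eq]
  haveI : Fintype ↑{d : Fin 3 →₀ ℕ | d.degree = m} := degFintype m
  rw [Module.finrank_eq_card_basis (basisRestrictSupport k {d : Fin 3 →₀ ℕ | d.degree = m})]
  rw [← Nat.card_eq_fintype_card]
  exact card_deg m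

variable {k}

lemma hom_div {f b : MvPolynomial (Fin 3) k} {e m : ℕ}
    (hf : f.IsHomogeneous e) (hb : b.IsHomogeneous m) (hdvd : f ∣ b) :
    ∃ c : MvPolynomial (Fin 3) k, c.IsHomogeneous (m - e) ∧ b = f * c := by
  obtain ⟨c, rfl⟩ := hdvd
  by_cases hcase : e ≤ m ∧ m - e ∈ Finset.range (c.totalDegree + 1)
  · refine ⟨homogeneousComponent (m - e) c, homogeneousComponent_isHomogeneous _ _, ?_⟩
    have h1 : homogeneousComponent m (f * c) = f * c := by
      rw [homogeneousComponent_of_mem hb, if_pos rfl]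
    conv_lhs => rw [← h1]
    conv_lhs => rw [← sum_homogeneousComponent c, Finset.mul_sum, map_sum]
    rw [Finset.sum_congr rfl (fun i _ => homogeneousComponent_of_mem
      (hf.mul (homogeneousComponent_isHomogeneous i c)))]
    have : ∀ i ∈ Finset.range (c.totalDegree + 1),
        (if m = e + i then f * homogeneousComponent i c else 0)
        = if i = m - e then f * homogeneousComponent i c else 0 := by
      intro i _
      congr 1
      simp only [eq_iff_iff]
      omega
    rw [Finset.sum_congr rfl this, Finset.sum_ite_eq' (Finset.range (c.totalDegree + 1))]
    rw [if_pos hcase.2]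
  · refine ⟨0, isHomogeneous_zero _ _ _, ?_⟩
    rw [mul_zero]
    have h1 : homogeneousComponent m (f * c) = f * c := by
      rw [homogeneousComponent_of_mem hb, if_pos rfl]
    conv_lhs => rw [← h1]
    conv_lhs => rw [← sum_homogeneousComponent c, Finset.mul_sum, map_sum]
    rw [Finset.sum_congr rfl (fun i _ => homogeneousComponent_of_mem
      (hf.mul (homogeneousComponent_isHomogeneous i c)))]
    apply Finset.sum_eq_zero
    intro i hi
    rw [if_neg]
    intro h
    apply hcase
    simp only [Finset.mem_range] at hi ⊢
    omega

lemma sep_form {P Q : Projectivization k (Fin 3 → k)} (hPQ : P ≠ Q) :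
    ∃ ℓ : MvPolynomial (Fin 3) k, ℓ.IsHomogeneous 1 ∧
      eval Q.rep ℓ = 0 ∧ eval P.rep ℓ ≠ 0 := by
  set u := Q.rep with hu
  set v := P.rep with hv
  have hu0 : u ≠ 0 := Q.rep_nonzero
  have hv0 : v ≠ 0 := P.rep_nonzero
  obtain ⟨j, hj⟩ : ∃ j, u j ≠ 0 := by
    by_contra h; push_neg at h; exact hu0 (funext h)
  by_cases hsep : ∃ i, u j * v i - u i * v j ≠ 0
  · obtain ⟨i, hi⟩ := hsep
    refine ⟨C (u j) * X i - C (u i) * X j, ?_, ?_, ?_⟩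
    · exact (isHomogeneous_C_mul_X (u j) i).sub (isHomogeneous_C_mul_X (u i) j)
    · simp only [map_sub, map_mul, eval_C, eval_X]
      ring
    · simp only [map_sub, map_mul, eval_C, eval_X]
      exact hi
  · exfalso
    push_neg at hsep
    apply hPQ
    have hc : v j ≠ 0 := by
      intro h0
      apply hv0
      funext i
      have := hsep i
      rw [h0, mul_zero, sub_eq_zero] at this
      have : u j * v i = 0 := this
      simpa [hj] using (mul_eq_zero.mp this).resolve_left hj
    have hveq : v = (v j / u j) • u := by
      funext i
      have := hsep i
      rw [sub_eq_zero] at this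
      rw [Pi.smul_apply, smul_eq_mul, div_mul_eq_mul_div, eq_div_iff hj]
      linear_combination this
    rw [← P.mk_rep, ← Q.mk_rep]
    rw [Projectivization.mk_eq_mk_iff]
    refine ⟨Units.mk0 (v j / u j) (by simp [hc, hj]), ?_⟩
    simp only [Units.smul_def, Units.val_mk0]
    exact hveq.symm

end Helpers

/-- Let `k` be algebraically closed, `f, g ∈ k[x,y,z]` homogeneous of degrees `e₁, e₂ ≥ 1`
with `f` irreducible. If `f` and `g` have at least `e₁·e₂ + 1` common zeros in `ℙ²`, then
every zero of `f` is a zero of `g`; equivalently, `f` divides `g`. -/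
theorem stmt3 (k : Type) [Field k] [IsAlgClosed k] (e₁ e₂ : ℕ) (he₁ : 1 ≤ e₁) (he₂ : 1 ≤ e₂)
    (f g : MvPolynomial (Fin 3) k)
    (hf : f.IsHomogeneous e₁) (hg : g.IsHomogeneous e₂)
    (hirr : Irreducible f)
    (hcard : ∃ T : Finset (Projectivization k (Fin 3 → k)),
      (∀ P ∈ T, VanishesAt f P ∧ VanishesAt g P) ∧ e₁ * e₂ + 1 ≤ T.card) :
    (∀ P : Projectivization k (Fin 3 → k), VanishesAt f P → VanishesAt g P) ∧ f ∣ g := by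
  classical
  obtain ⟨T, hT, hTcard⟩ := hcard
  have hfg : f ∣ g := by
    by_contra hndvd
    have hprime : Prime f := UniqueFactorizationMonoid.irreducible_iff_prime.mp hirr
    have hf0 : f ≠ 0 := hirr.ne_zero
    set N := T.card with hN
    set d := e₁ + e₂ + N with hd
    set Hd := homogeneousSubmodule (Fin 3) k d with hHd
    set H1 := homogeneousSubmodule (Fin 3) k (e₂ + N) with hH1
    set H2 := homogeneousSubmodule (Fin 3) k (e₁ + N) with hH2
    set H0 := homogeneousSubmodule (Fin 3) k N with hH0
    -- evaluation map
    let ev : MvPolynomial (Fin 3) k →ₗ[k] (↥T → k) :=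
      { toFun := fun p Q => eval (Q : Projectivization k (Fin 3 → k)).rep p
        map_add' := by intros; funext Q; simp
        map_smul' := by intros; funext Q; simp [smul_eval] }
    let evd : Hd →ₗ[k] (↥T → k) := ev.comp Hd.subtype
    -- the multiplication map
    have hmemΦ : ∀ x : ↥H1 × ↥H2, (x.1 : MvPolynomial (Fin 3) k) * f
        + (x.2 : MvPolynomial (Fin 3) k) * g ∈ Hd := by
      rintro ⟨a, b⟩
      have ha : (a : MvPolynomial (Fin 3) k).IsHomogeneous (e₂ + N) := a.2
      have hbh : (b : MvPolynomial (Fin 3) k).IsHomogeneous (e₁ + N) := b.2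
      have h1 : ((a : MvPolynomial (Fin 3) k) * f).IsHomogeneous d := by
        have := ha.mul hf
        rwa [show e₂ + N + e₁ = d by omega] at this
      have h2 : ((b : MvPolynomial (Fin 3) k) * g).IsHomogeneous d := by
        have := hbh.mul hg
        rwa [show e₁ + N + e₂ = d by omega] at this
      exact h1.add h2
    let Φ : (↥H1 × ↥H2) →ₗ[k] ↥Hd := LinearMap.codRestrict Hd
      ((LinearMap.mulRight k f).comp (H1.subtype.comp (LinearMap.fst k ↥H1 ↥H2))
        + (LinearMap.mulRight k g).comp (H2.subtype.comp (LinearMap.snd k ↥H1 ↥H2)))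
      hmemΦ
    -- surjectivity of evd
    have hsurj : LinearMap.range evd = ⊤ := by
      rw [← top_le_iff, ← (Pi.basisFun k ↥T).span_eq, Submodule.span_le]
      rintro _ ⟨Q, rfl⟩
      -- linear forms separating Q from the other points of T
      let L : Projectivization k (Fin 3 → k) → MvPolynomial (Fin 3) k := fun R =>
        if h : (Q : Projectivization k (Fin 3 → k)) ≠ R then (sep_form h).choose else 1
      have hL : ∀ R, (Q : Projectivization k (Fin 3 → k)) ≠ R →
          (L R).IsHomogeneous 1 ∧ eval R.rep (L R) = 0 ∧
            eval (Q : Projectivization k (Fin 3 → k)).rep (L R) ≠ 0 := by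
        intro R h
        simp only [L, dif_pos h]
        exact (sep_form h).choose_spec
      obtain ⟨i0, hi0⟩ : ∃ i, (Q : Projectivization k (Fin 3 → k)).rep i ≠ 0 := by
        by_contra h; push_neg at h
        exact (Q : Projectivization k (Fin 3 → k)).rep_nonzero (funext h)
      set h₀ : MvPolynomial (Fin 3) k :=
        (∏ R ∈ T.erase (Q : Projectivization k (Fin 3 → k)), L R) * (X i0) ^ (d - (N - 1))
        with hh₀
      have hcarderase : (T.erase (Q : Projectivization k (Fin 3 → k))).card = N - 1 := by
        rw [Finset.card_erase_of_mem Q.2]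
      have hforms : ∀ R ∈ T.erase (Q : Projectivization k (Fin 3 → k)),
          (Q : Projectivization k (Fin 3 → k)) ≠ R := by
        intro R hR hQR
        exact (Finset.ne_of_mem_erase hR) hQR.symm
      have hmem : h₀ ∈ Hd := by
        have hp : (∏ R ∈ T.erase (Q : Projectivization k (Fin 3 → k)), L R).IsHomogeneous
            (N - 1) := by
          have := MvPolynomial.IsHomogeneous.prod (T.erase (Q : Projectivization k (Fin 3 → k)))
            L (fun _ => 1) (fun R hR => (hL R (hforms R hR)).1)
          rwa [Finset.sum_const, smul_eq_mul, mul_one, hcarderase] at this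
        have hx : ((X i0 : MvPolynomial (Fin 3) k) ^ (d - (N - 1))).IsHomogeneous
            (d - (N - 1)) := by
          have := (isHomogeneous_X k i0).pow (d - (N - 1))
          rwa [one_mul] at this
        have := hp.mul hx
        rwa [show (N - 1) + (d - (N - 1)) = d by omega] at this
      have hvalQ : eval (Q : Projectivization k (Fin 3 → k)).rep h₀ ≠ 0 := by
        rw [hh₀, map_mul, map_prod, map_pow, eval_X]
        apply mul_ne_zero
        · rw [Finset.prod_ne_zero_iff]
          exact fun R hR => (hL R (hforms R hR)).2.2
        · exact pow_ne_zero _ hi0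
      have hvalR : ∀ R : ↥T, R ≠ Q → eval
          (R : Projectivization k (Fin 3 → k)).rep h₀ = 0 := by
        intro R hR
        rw [hh₀, map_mul, map_prod]
        have hRmem : (R : Projectivization k (Fin 3 → k)) ∈
            T.erase (Q : Projectivization k (Fin 3 → k)) :=
          Finset.mem_erase.mpr ⟨fun h => hR (Subtype.ext h), R.2⟩
        rw [Finset.prod_eq_zero hRmem (hL _ (hforms _ hRmem)).2.1, zero_mul]
      -- conclude
      have hv : evd ⟨h₀, hmem⟩ =
          Pi.single Q (eval (Q : Projectivization k (Fin 3 → k)).rep h₀) := by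
        funext R
        show eval (R : Projectivization k (Fin 3 → k)).rep h₀ = _
        rw [Pi.single_apply]
        by_cases h : R = Q
        · rw [if_pos h, h]
        · rw [if_neg h, hvalR R h]
      rw [Pi.basisFun_apply]
      have h1 : Pi.single Q (eval (Q : Projectivization k (Fin 3 → k)).rep h₀)
          ∈ LinearMap.range evd := ⟨⟨h₀, hmem⟩, hv⟩
      have h2 := Submodule.smul_mem (LinearMap.range evd)
        (eval (Q : Projectivization k (Fin 3 → k)).rep h₀)⁻¹ h1
      rwa [← Pi.single_smul, smul_eq_mul, inv_mul_cancel₀ hvalQ] at h2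
    -- range Φ ≤ ker evd
    have hVU : LinearMap.range Φ ≤ LinearMap.ker evd := by
      rintro _ ⟨⟨a, b⟩, rfl⟩
      rw [LinearMap.mem_ker]
      funext Q
      show eval (Q : Projectivization k (Fin 3 → k)).rep
        ((a : MvPolynomial (Fin 3) k) * f + (b : MvPolynomial (Fin 3) k) * g) = 0
      have h1 : eval (Q : Projectivization k (Fin 3 → k)).rep f = 0 := (hT Q.1 Q.2).1
      have h2 : eval (Q : Projectivization k (Fin 3 → k)).rep g = 0 := (hT Q.1 Q.2).2
      rw [map_add, map_mul, map_mul, h1, h2, mul_zero, mul_zero, add_zero]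
    -- kernel bound
    have hker : Module.finrank k (LinearMap.ker Φ) ≤ Module.finrank k H0 := by
      have hmemW : ∀ x : LinearMap.ker Φ, ((x : ↥H1 × ↥H2).2 : MvPolynomial (Fin 3) k)
          ∈ H0.map (LinearMap.mulRight k f) := by
        rintro ⟨⟨a, b⟩, hx⟩
        have heq : (a : MvPolynomial (Fin 3) k) * f + (b : MvPolynomial (Fin 3) k) * g = 0 :=
          congrArg Subtype.val (LinearMap.mem_ker.mp hx)
        have hdvd : f ∣ (b : MvPolynomial (Fin 3) k) * g :=
          ⟨-(a : MvPolynomial (Fin 3) k), by linear_combination heq⟩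
        have hdvdb : f ∣ (b : MvPolynomial (Fin 3) k) :=
          (hprime.2.2 _ _ hdvd).resolve_right hndvd
        have hbh : (b : MvPolynomial (Fin 3) k).IsHomogeneous (e₁ + N) := b.2
        obtain ⟨c, hc, hbc⟩ := hom_div hf hbh hdvdb
        rw [show e₁ + N - e₁ = N by omega] at hc
        refine ⟨c, hc, ?_⟩
        show c * f = (b : MvPolynomial (Fin 3) k)
        rw [mul_comm]
        exact hbc.symm
      let μ : LinearMap.ker Φ →ₗ[k] ↥(H0.map (LinearMap.mulRight k f)) :=
        LinearMap.codRestrict _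
          ((H2.subtype.comp (LinearMap.snd k ↥H1 ↥H2)).comp (LinearMap.ker Φ).subtype) hmemW
      have hinj : Function.Injective μ := by
        rintro ⟨⟨a, b⟩, hx⟩ ⟨⟨a', b'⟩, hx'⟩ h
        have hb0 := Subtype.ext_iff.mp h
        have hb : (b : MvPolynomial (Fin 3) k) = (b' : MvPolynomial (Fin 3) k) := hb0
        have heq : (a : MvPolynomial (Fin 3) k) * f + (b : MvPolynomial (Fin 3) k) * g = 0 :=
          congrArg Subtype.val (LinearMap.mem_ker.mp hx)
        have heq' : (a' : MvPolynomial (Fin 3) k) * f + (b' : MvPolynomial (Fin 3) k) * g = 0 :=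
          congrArg Subtype.val (LinearMap.mem_ker.mp hx')
        have ha : (a : MvPolynomial (Fin 3) k) = (a' : MvPolynomial (Fin 3) k) := by
          have : ((a : MvPolynomial (Fin 3) k) - (a' : MvPolynomial (Fin 3) k)) * f = 0 := by
            rw [sub_mul]
            rw [hb] at heq
            linear_combination heq - heq'
          rcases mul_eq_zero.mp this with h' | h'
          · exact sub_eq_zero.mp h'
          · exact absurd h' hf0
        apply Subtype.ext
        exact Prod.ext (Subtype.ext ha) (Subtype.ext hb)
      calc Module.finrank k (LinearMap.ker Φ)
          ≤ Module.finrank k ↥(H0.map (LinearMap.mulRight k f)) :=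
            LinearMap.finrank_le_finrank_of_injective hinj
        _ ≤ Module.finrank k H0 := Submodule.finrank_map_le _ _
    -- rank computations
    have r1 : Module.finrank k (↥H1 × ↥H2)
        = Module.finrank k (LinearMap.range Φ) + Module.finrank k (LinearMap.ker Φ) :=
      (LinearMap.finrank_range_add_finrank_ker Φ).symm
    have r2 : Module.finrank k (↥H1 × ↥H2) = Module.finrank k H1 + Module.finrank k H2 :=
      Module.finrank_prod
    have r3 : Module.finrank k (LinearMap.range evd) + Module.finrank k (LinearMap.ker evd)
        = Module.finrank k Hd := LinearMap.finrank_range_add_finrank_ker evd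
    have r4 : Module.finrank k (LinearMap.range evd) = N := by
      rw [hsurj, finrank_top, Module.finrank_pi, Fintype.card_coe]
    have r5 : Module.finrank k (LinearMap.range Φ) ≤ Module.finrank k (LinearMap.ker evd) :=
      Submodule.finrank_mono hVU
    have d1 : Module.finrank k Hd = (d + 2).choose 2 := finrank_H k d
    have d2 : Module.finrank k H1 = (e₂ + N + 2).choose 2 := finrank_H k (e₂ + N)
    have d3 : Module.finrank k H2 = (e₁ + N + 2).choose 2 := finrank_H k (e₁ + N)
    have d4 : Module.finrank k H0 = (N + 2).choose 2 := finrank_H k N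
    have key := choose_identity e₁ e₂ N
    rw [← hd] at key
    omega
  refine ⟨?_, hfg⟩
  obtain ⟨c, rfl⟩ := hfg
  intro P hP
  show eval P.rep (f * c) = 0
  rw [map_mul, show eval P.rep f = 0 from hP, zero_mul]
end

section
/- Let k be a field and r ≥ 0 an integer. Let g₁, …, g_ℓ ∈ k[x, y, z] be homogeneous polynomials of degrees f₁, …, f_ℓ ≥ 1, and set f = f₁ + ⋯ + f_ℓ. Let Γ be a finite set of points of ℙ² over k satisfying the Cayley–Bacharach condition CB(r), and suppose every point of Γ lies in the vanishing locus of at least one g_j. Fix an index i with f − fᵢ ≤ r, and let Γᵢ be the set of points P ∈ Γ such that gᵢ vanishes at P and g_j does not vanish at P for every j ≠ i. If Γᵢ is nonempty, then Γᵢ satisfies the Cayley–Bacharach condition CB(r + fᵢ − f), and consequently |Γᵢ| ≥ r + fᵢ − f + 2. -/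
/-- The Cayley–Bacharach condition `CB(r)` for a finite set of points of `ℙ²`. -/
def CayleyBacharach {k : Type} [Field k] (r : ℕ)
    (Γ : Finset (Projectivization k (Fin 3 → k))) : Prop :=
  ∀ P ∈ Γ, ∀ f : MvPolynomial (Fin 3) k, f.IsHomogeneous r →
    (∀ Q ∈ Γ, Q ≠ P → VanishesAt f Q) → VanishesAt f P

open MvPolynomial in
lemma exists_sep_linear {k : Type} [Field k]
    (P Q : Projectivization k (Fin 3 → k)) (hne : Q ≠ P) :
    ∃ L : MvPolynomial (Fin 3) k, L.IsHomogeneous 1 ∧ VanishesAt L Q ∧ ¬ VanishesAt L P := by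
  -- find m n with Q.rep m * P.rep n ≠ Q.rep n * P.rep m
  by_cases hprop : ∀ m n : Fin 3, Q.rep m * P.rep n = Q.rep n * P.rep m
  · exfalso
    obtain ⟨m, hm⟩ := Function.ne_iff.1 (Projectivization.rep_nonzero Q)
    have hm' : Q.rep m ≠ 0 := by simpa using hm
    have hPm : P.rep = (P.rep m / Q.rep m) • Q.rep := by
      funext n
      simp only [Pi.smul_apply, smul_eq_mul]
      field_simp
      linear_combination hprop m n
    have hc : P.rep m / Q.rep m ≠ 0 := by
      intro h0
      apply Projectivization.rep_nonzero P
      rw [hPm, h0, zero_smul]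
    apply hne
    symm
    rw [← Projectivization.mk_rep P, ← Projectivization.mk_rep Q,
      Projectivization.mk_eq_mk_iff]
    exact ⟨Units.mk0 _ hc, hPm.symm⟩
  · push_neg at hprop
    obtain ⟨m, n, hmn⟩ := hprop
    refine ⟨C (Q.rep m) * X n - C (Q.rep n) * X m, ?_, ?_, ?_⟩
    · exact ((isHomogeneous_X k n).C_mul _).sub ((isHomogeneous_X k m).C_mul _)
    · simp [VanishesAt, mul_comm]
    · simp only [VanishesAt, map_sub, map_mul, eval_C, eval_X, sub_eq_zero]
      exact hmn

open MvPolynomial in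
lemma cb_card {k : Type} [Field k] (s : ℕ)
    (Γ : Finset (Projectivization k (Fin 3 → k)))
    (hCB : CayleyBacharach s Γ) (hne : Γ.Nonempty) : s + 2 ≤ Γ.card := by
  classical
  by_contra hlt
  push_neg at hlt
  obtain ⟨P, hP⟩ := hne
  set E := Γ.erase P with hE
  have hEcard : E.card = Γ.card - 1 := Finset.card_erase_of_mem hP
  have hEle : E.card ≤ s := by
    have := Finset.card_pos.2 ⟨P, hP⟩
    omega
  choose L hLhom hLQ hLP using fun Q : E => exists_sep_linear P Q.1 (Finset.ne_of_mem_erase Q.2)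
  obtain ⟨m, hm⟩ := Function.ne_iff.1 (Projectivization.rep_nonzero P)
  set F : MvPolynomial (Fin 3) k :=
    (∏ Q ∈ E.attach, L Q) * (X m : MvPolynomial (Fin 3) k) ^ (s - E.card) with hF
  have hFhom : F.IsHomogeneous s := by
    have h1 : (∏ Q ∈ E.attach, L Q).IsHomogeneous (∑ _Q ∈ E.attach, 1) :=
      IsHomogeneous.prod _ _ _ (fun Q _ => hLhom Q)
    have h2 := (isHomogeneous_X k m).pow (s - E.card)
    have := h1.mul h2
    simpa [Finset.card_attach, hEle, Nat.add_sub_cancel' hEle] using this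
  have hvan : ∀ Q ∈ Γ, Q ≠ P → VanishesAt F Q := by
    intro Q hQ hQP
    have hQE : Q ∈ E := Finset.mem_erase.2 ⟨hQP, hQ⟩
    simp only [VanishesAt, hF, map_mul, map_prod, map_pow]
    have : MvPolynomial.eval Q.rep (L ⟨Q, hQE⟩) = 0 := hLQ ⟨Q, hQE⟩
    rw [Finset.prod_eq_zero (Finset.mem_attach _ ⟨Q, hQE⟩) this, zero_mul]
  have hFP := hCB P hP F hFhom hvan
  simp only [VanishesAt, hF, map_mul, map_prod, map_pow, eval_X, mul_eq_zero,
    pow_eq_zero_iff', Finset.prod_eq_zero_iff] at hFP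
  rcases hFP with ⟨Q, _, hQ0⟩ | ⟨h0, _⟩
  · exact hLP Q hQ0
  · exact hm h0



/-- Let `g₁, …, g_ℓ ∈ k[x,y,z]` be homogeneous of degrees `f₁, …, f_ℓ ≥ 1`, `f = ∑ fⱼ`.
Let `Γ ⊆ ℙ²` satisfy `CB(r)`, with every point of `Γ` on the vanishing locus of some `gⱼ`.
Fix `i` with `f - fᵢ ≤ r` and let `Γᵢ` be the points of `Γ` on the vanishing locus of `gᵢ`
and of no other `gⱼ`. If `Γᵢ ≠ ∅` then `Γᵢ` satisfies `CB(r + fᵢ - f)` and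
`|Γᵢ| ≥ r + fᵢ - f + 2`. -/
theorem stmt7 (k : Type) [Field k] (r ℓ : ℕ)
    (g : Fin ℓ → MvPolynomial (Fin 3) k) (fdeg : Fin ℓ → ℕ)
    (hdeg : ∀ j, 1 ≤ fdeg j) (hhom : ∀ j, (g j).IsHomogeneous (fdeg j))
    (f : ℕ) (hf : f = ∑ j, fdeg j)
    (Γ : Finset (Projectivization k (Fin 3 → k)))
    (hCB : CayleyBacharach r Γ)
    (hcover : ∀ P ∈ Γ, ∃ j, VanishesAt (g j) P)
    (i : Fin ℓ) (hir : f - fdeg i ≤ r)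
    (Γi : Finset (Projectivization k (Fin 3 → k)))
    (hΓi : ∀ P, P ∈ Γi ↔ P ∈ Γ ∧ VanishesAt (g i) P ∧ ∀ j, j ≠ i → ¬ VanishesAt (g j) P)
    (hne : Γi.Nonempty) :
    CayleyBacharach (r + fdeg i - f) Γi ∧ r + fdeg i - f + 2 ≤ Γi.card := by
  have hfi : fdeg i ≤ f := hf ▸ Finset.single_le_sum (fun j _ => Nat.zero_le _) (Finset.mem_univ i)
  have hsum : fdeg i + ∑ j ∈ Finset.univ.erase i, fdeg j = f := by
    rw [hf]; exact Finset.add_sum_erase _ _ (Finset.mem_univ i)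
  have hcb : CayleyBacharach (r + fdeg i - f) Γi := by
    intro P hP h hhomh hvan
    obtain ⟨hPΓ, hPi, hPj⟩ := (hΓi P).1 hP
    set G : MvPolynomial (Fin 3) k := ∏ j ∈ Finset.univ.erase i, g j with hG
    have hGhom : G.IsHomogeneous (f - fdeg i) := by
      have := MvPolynomial.IsHomogeneous.prod (Finset.univ.erase i) g fdeg (fun j _ => hhom j)
      have heq : ∑ j ∈ Finset.univ.erase i, fdeg j = f - fdeg i := by omega
      rwa [heq] at this
    have hFhom : (h * G).IsHomogeneous r := by
      have := hhomh.mul hGhom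
      have heq : r + fdeg i - f + (f - fdeg i) = r := by omega
      rwa [heq] at this
    have hvanF : ∀ Q ∈ Γ, Q ≠ P → VanishesAt (h * G) Q := by
      intro Q hQ hQP
      simp only [VanishesAt, map_mul]
      by_cases hQi : Q ∈ Γi
      · rw [hvan Q hQi hQP, zero_mul]
      · have : ∃ j, j ≠ i ∧ VanishesAt (g j) Q := by
          obtain ⟨j, hj⟩ := hcover Q hQ
          by_cases hji : j = i
          · subst hji
            by_contra hno
            push_neg at hno
            exact hQi ((hΓi Q).2 ⟨hQ, hj, fun j' hj' => hno j' hj'⟩)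
          · exact ⟨j, hji, hj⟩
        obtain ⟨j, hji, hj⟩ := this
        have hj' : MvPolynomial.eval Q.rep (g j) = 0 := hj
        rw [hG, map_prod, Finset.prod_eq_zero (Finset.mem_erase.2 ⟨hji, Finset.mem_univ j⟩) hj',
          mul_zero]
    have hFP := hCB P hPΓ (h * G) hFhom hvanF
    simp only [VanishesAt, map_mul, mul_eq_zero, hG, map_prod, Finset.prod_eq_zero_iff] at hFP ⊢
    rcases hFP with h0 | ⟨j, hj, hj0⟩
    · exact h0
    · exact absurd hj0 (hPj j (Finset.mem_erase.1 hj).1)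
  exact ⟨hcb, cb_card _ _ hcb hne⟩
end
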